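/- Let F(X) be the free group on a set X, let Y ⊆ X, and let w ∈ F(X) be an element whose reduced word uses a generator from X \ Y. Let t be a symbol not in X. Then the map sending t to w and each y ∈ Y to itself extends to a group isomorphism from the free group F({t} ∪ Y) onto the subgroup of F(X) generated by {w} ∪ Y. -/

import Mathlib

namespace StmtAux
open FreeGroup List

variable {α : Type} [DecidableEq α]

/-- inverse of a single letter -/
abbrev inv1 (p : α × Bool) : α × Bool := (p.1, !p.2)

@[simp] lemma inv1_inv1 (p : α × Bool) : inv1 (inv1 p) = p := by
  cases p with | mk a b => simp [inv1]

lemma inv1_injective : Function.Injective (inv1 (α := α)) := by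
  intro p q h
  have := congrArg inv1 h
  simpa using this

/-- A word is reduced if no two adjacent letters are inverse to each other. -/
def IsRed (L : List (α × Bool)) : Prop := List.Chain' (fun p q => q ≠ inv1 p) L

lemma IsRed.reduce_eq {L : List (α × Bool)} (h : IsRed L) : reduce L = L := by
  induction L with
  | nil => rfl
  | cons x L ih =>
    have hL : IsRed L := h.tail
    rw [FreeGroup.reduce.cons, ih hL]
    cases L with
    | nil => rfl
    | cons hd tl =>
      have hne : hd ≠ inv1 x := (List.isChain_cons_cons.mp h).1
      have : ¬ (x.1 = hd.1 ∧ x.2 = !hd.2) := by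
        rintro ⟨h1, h2⟩
        apply hne
        cases x with | mk a b =>
        cases hd with | mk c d =>
        simp only at h1 h2
        subst h1
        simp [inv1, h2]
      simp [this]

lemma isRed_reduce (L : List (α × Bool)) : IsRed (reduce L) := by
  induction L with
  | nil => exact List.isChain_nil
  | cons x L ih =>
    rw [FreeGroup.reduce.cons]
    cases h : reduce L with
    | nil => exact List.isChain_singleton _
    | cons hd tl =>
      rw [h] at ih
      by_cases hc : x.1 = hd.1 ∧ x.2 = !hd.2
      · simp only [if_pos hc]
        exact ih.tail
      · simp only [if_neg hc]
        refine List.isChain_cons_cons.mpr ⟨?_, ih⟩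
        intro he
        apply hc
        cases x with | mk a b =>
        cases hd with | mk c d =>
        simp [inv1] at he
        obtain ⟨h1, h2⟩ := he
        constructor
        · exact h1.symm
        · simp [h2]

lemma isRed_toWord (g : FreeGroup α) : IsRed g.toWord := by
  rw [← FreeGroup.reduce_toWord]
  exact isRed_reduce _

lemma toWord_mk_of_isRed {L : List (α × Bool)} (h : IsRed L) : (FreeGroup.mk L).toWord = L := by
  rw [FreeGroup.toWord_mk, h.reduce_eq]

lemma invRev_eq (L : List (α × Bool)) : invRev L = (L.map inv1).reverse := rfl

lemma invRev_append (A B : List (α × Bool)) : invRev (A ++ B) = invRev B ++ invRev A := by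
  simp [invRev_eq]

@[simp] lemma invRev_singleton (p : α × Bool) : invRev [p] = [inv1 p] := rfl

lemma head?_invRev (L : List (α × Bool)) : (invRev L).head? = L.getLast?.map inv1 := by
  rw [invRev_eq, List.head?_reverse, List.getLast?_map]

lemma getLast?_invRev (L : List (α × Bool)) : (invRev L).getLast? = L.head?.map inv1 := by
  rw [invRev_eq, List.getLast?_reverse, List.head?_map]

lemma isRed_invRev {L : List (α × Bool)} (h : IsRed L) : IsRed (invRev L) := by
  have : reduce (invRev L) = invRev L := by
    rw [FreeGroup.reduce_invRev, h.reduce_eq]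
  have h2 := isRed_reduce (invRev L)
  rwa [this] at h2

/-- multiplication with no cancellation at the junction -/
lemma toWord_mk_mul {L : List (α × Bool)} (g : FreeGroup α) (hL : IsRed L)
    (hj : ∀ x ∈ L.getLast?, ∀ q ∈ g.toWord.head?, q ≠ inv1 x) :
    (FreeGroup.mk L * g).toWord = L ++ g.toWord := by
  conv_lhs => rw [← FreeGroup.mk_toWord (x := g)]
  rw [FreeGroup.mul_mk]
  apply toWord_mk_of_isRed
  exact List.isChain_append.mpr ⟨hL, isRed_toWord g, hj⟩

/-- cancellation of a single letter against the head -/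
lemma toWord_cancel {g : FreeGroup α} {p : α × Bool} {t : List (α × Bool)}
    (h : g.toWord = p :: t) : (FreeGroup.mk [inv1 p] * g).toWord = t := by
  conv_lhs => rw [← FreeGroup.mk_toWord (x := g)]
  rw [FreeGroup.mul_mk, h]
  show (FreeGroup.mk (inv1 p :: p :: t)).toWord = t
  rw [FreeGroup.toWord_mk]
  have ht : reduce (p :: t) = p :: t := by
    have : IsRed (p :: t) := by rw [← h]; exact isRed_toWord g
    exact this.reduce_eq
  rw [FreeGroup.reduce.cons, ht]
  cases p with | mk a b => simp [inv1]

end StmtAux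

namespace StmtAux
open FreeGroup List
set_option linter.unusedSectionVars false

variable {α : Type} [DecidableEq α]

lemma isRed_append {A B : List (α × Bool)} :
    IsRed (A ++ B) ↔ IsRed A ∧ IsRed B ∧ ∀ x ∈ A.getLast?, ∀ q ∈ B.head?, q ≠ inv1 x :=
  List.isChain_append

/-- The central ping-pong computation. -/
lemma pp_core {R V : List (α × Bool)} {f l : α × Bool}
    (hf : V.head? = some f) (hl : V.getLast? = some l)
    (hred : IsRed (R ++ V ++ invRev R)) {g : FreeGroup α}
    (hg : ¬ (R ++ [inv1 l]) <+: g.toWord) :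
    (R ++ [f]) <+: ((FreeGroup.mk (R ++ V ++ invRev R)) * g).toWord := by
  have hV : V ≠ [] := by rintro rfl; simp at hf
  rw [List.append_assoc, isRed_append] at hred
  obtain ⟨hRred, hrest, hjRV⟩ := hred
  rw [isRed_append] at hrest
  obtain ⟨hVred, hRinvred, hjVR⟩ := hrest
  have j3 : ∀ x ∈ R.getLast?, x ≠ l := by
    intro x hx hxl
    subst hxl
    have hhead : (invRev R).head? = some (inv1 x) := by
      rw [head?_invRev, hx]; rfl
    exact hjVR x hl (inv1 x) hhead rfl
  have hfVR : (V ++ invRev R).head? = some f := by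
    rcases V with _ | ⟨v0, vt⟩
    · exact absurd rfl hV
    · simpa using hf
  have j2 : ∀ x ∈ R.getLast?, f ≠ inv1 x := fun x hx => hjRV x hx f hfVR
  set u : FreeGroup α := (FreeGroup.mk R)⁻¹ * g with hu
  have step1 : ∀ q ∈ u.toWord.head?, q ≠ inv1 l := by
    intro q hq hql
    subst hql
    rcases hU : u.toWord with _ | ⟨q', t⟩
    · rw [hU] at hq; cases hq
    · rw [hU] at hq
      rw [List.head?_cons] at hq
      cases hq
      have hgu : g = FreeGroup.mk R * u := by rw [hu]; group
      have hgw : g.toWord = R ++ u.toWord := by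
        rw [hgu]
        apply toWord_mk_mul _ hRred
        intro x hx q2 hq2
        rw [hU, List.head?_cons] at hq2
        cases hq2
        intro h
        exact (j3 x hx) (inv1_injective h).symm
      apply hg
      rw [hgw, hU]
      exact ⟨t, by simp⟩
  have step2 : (FreeGroup.mk V * u).toWord = V ++ u.toWord := by
    apply toWord_mk_mul _ hVred
    intro x hx q hq
    rw [hl] at hx
    cases hx
    exact step1 q hq
  have step3 : FreeGroup.mk (R ++ V ++ invRev R) * g
      = FreeGroup.mk R * (FreeGroup.mk V * u) := by
    rw [← FreeGroup.mul_mk, ← FreeGroup.mul_mk, ← FreeGroup.inv_mk, hu]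
    group
  rw [step3]
  have step4 : (FreeGroup.mk R * (FreeGroup.mk V * u)).toWord = R ++ (V ++ u.toWord) := by
    rw [toWord_mk_mul _ hRred]
    · rw [step2]
    · intro x hx q hq
      rw [step2] at hq
      rcases hVc : V with _ | ⟨v0, vt⟩
      · exact absurd hVc hV
      · subst hVc
        rw [List.head?_cons] at hf
        cases hf
        simp only [List.cons_append, List.head?_cons] at hq
        cases hq
        exact j2 x hx
  rw [step4]
  rcases hVc : V with _ | ⟨v0, vt⟩
  · exact absurd hVc hV
  · subst hVc
    rw [List.head?_cons] at hf
    cases hf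
    exact ⟨vt ++ u.toWord, by simp⟩

end StmtAux

namespace StmtAux
open FreeGroup List
set_option linter.unusedSectionVars false

variable {α : Type} [DecidableEq α]

/-- cyclic reduction decomposition -/
lemma cyc_decomp : ∀ (n : ℕ) (W : List (α × Bool)), W.length ≤ n → IsRed W → W ≠ [] →
    ∃ R V f l, V.head? = some f ∧ V.getLast? = some l ∧ f ≠ inv1 l ∧
      W = R ++ V ++ invRev R := by
  intro n
  induction n with
  | zero =>
    intro W hlen hred hne
    rw [Nat.le_zero, List.length_eq_zero_iff] at hlen
    exact absurd hlen hne
  | succ n ih =>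
    intro W hlen hred hne
    rcases W with _ | ⟨a, t⟩
    · exact absurd rfl hne
    rcases ht : t.getLast? with _ | q
    · -- t = [], W = [a]
      rw [List.getLast?_eq_none_iff] at ht
      subst ht
      exact ⟨[], [a], a, a, rfl, rfl, by cases a with | mk x b => simp [inv1], by simp [invRev_eq]⟩
    · by_cases hc : a = inv1 q
      · -- peel
        have htne : t ≠ [] := by rintro rfl; simp at ht
        obtain ⟨M, hM⟩ : ∃ M, t = M ++ [q] := by
          refine ⟨t.dropLast, ?_⟩
          conv_lhs => rw [← List.dropLast_append_getLast htne]
          rw [List.getLast?_eq_getLast htne] at ht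
          rw [Option.some.inj ht]
        subst hM
        have hMne : M ≠ [] := by
          rintro rfl
          -- W = [a, q] with a = inv1 q, contradicting reducedness
          have : q ≠ inv1 a := (List.isChain_cons_cons.mp hred).1
          apply this
          rw [hc]
          cases q with | mk x b => simp [inv1]
        have hMred : IsRed M := by
          have h1 : IsRed (M ++ [q]) := hred.tail
          exact (isRed_append.mp h1).1
        have hMlen : M.length ≤ n := by
          have := hlen
          simp only [List.length_cons, List.length_append, List.length_singleton] at this
          omega
        obtain ⟨R, V, f, l, hf, hl, hfl, hW⟩ := ih M hMlen hMred hMne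
        refine ⟨a :: R, V, f, l, hf, hl, hfl, ?_⟩
        have hq : inv1 a = q := by rw [hc]; cases q with | mk x b => simp [inv1]
        calc a :: (M ++ [q]) = a :: (R ++ V ++ invRev R) ++ [q] := by rw [hW]; simp
        _ = (a :: R) ++ V ++ (invRev R ++ [inv1 a]) := by rw [hq]; simp
        _ = (a :: R) ++ V ++ invRev (a :: R) := by
              congr 1
              show invRev R ++ invRev [a] = invRev ([a] ++ R)
              rw [invRev_append]
      · -- W itself works
        refine ⟨[], a :: t, a, q, rfl, ?_, ?_, by simp [invRev_eq]⟩
        · rw [List.getLast?_cons, ht]; rfl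
        · exact hc

/-- membership in the closure of `of '' Y` forces all letters in `Y` -/
lemma mem_closure_letters {Y : Set α} {g : FreeGroup α}
    (hg : g ∈ Subgroup.closure (FreeGroup.of '' Y)) :
    ∀ p ∈ g.toWord, p.1 ∈ Y := by
  induction hg using Subgroup.closure_induction with
  | mem x hx =>
    obtain ⟨y, hy, rfl⟩ := hx
    intro p hp
    rw [FreeGroup.toWord_of] at hp
    simp at hp
    subst hp; exact hy
  | one => intro p hp; simp [FreeGroup.toWord_one] at hp
  | mul a b _ _ iha ihb =>
    intro p hp
    have := (FreeGroup.toWord_mul_sublist a b).mem hp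
    rcases List.mem_append.mp this with h | h
    · exact iha p h
    · exact ihb p h
  | inv a _ iha =>
    intro p hp
    rw [FreeGroup.toWord_inv] at hp
    rw [invRev_eq, List.mem_reverse, List.mem_map] at hp
    obtain ⟨q, hq, rfl⟩ := hp
    exact iha q hq

lemma single_mem_closure {Y : Set α} {x : α} (hx : x ∈ Y) (b : Bool) :
    FreeGroup.mk [(x, b)] ∈ Subgroup.closure (FreeGroup.of '' Y) := by
  have hof : FreeGroup.of x ∈ Subgroup.closure (FreeGroup.of '' Y) :=
    Subgroup.subset_closure ⟨x, hx, rfl⟩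
  cases b
  · have : FreeGroup.mk [(x, false)] = (FreeGroup.of x)⁻¹ := by
      show _ = (FreeGroup.mk [(x, true)])⁻¹
      rw [FreeGroup.inv_mk]; rfl
    rw [this]; exact inv_mem hof
  · exact hof

end StmtAux

namespace StmtAux
open FreeGroup List
set_option linter.unusedSectionVars false

variable {α : Type} [DecidableEq α]

lemma head?_of_prefix {β : Type*} {P L : List β} (h : P <+: L) (hp : P ≠ []) :
    L.head? = P.head? := by
  obtain ⟨t, rfl⟩ := h
  rcases P with _ | ⟨p, P'⟩
  · exact absurd rfl hp
  · rfl

/-- the generator map -/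
def gens {X : Type} (Y : Set X) (w : FreeGroup X) : Option Y → FreeGroup X :=
  fun o => Option.rec w (fun y => FreeGroup.of (y : X)) o

@[simp] lemma gens_none {X : Type} (Y : Set X) (w : FreeGroup X) : gens Y w none = w := rfl
@[simp] lemma gens_some {X : Type} (Y : Set X) (w : FreeGroup X) (y : Y) :
    gens Y w (some y) = FreeGroup.of (y : X) := rfl

lemma prefix_of_head? {β : Type*} {L : List β} {p : β} (h : L.head? = some p) : [p] <+: L := by
  rcases L with _ | ⟨a, t⟩
  · cases h
  · rw [List.head?_cons] at h
    cases h
    exact ⟨t, rfl⟩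

lemma letter_mul {x : α} {b : Bool} {g : FreeGroup α}
    (h : ¬ [(x, !b)] <+: g.toWord) :
    (FreeGroup.mk [(x, b)] * g).toWord = (x, b) :: g.toWord := by
  apply toWord_mk_mul _ (List.isChain_singleton _)
  intro p hp q hq
  simp only [List.getLast?_singleton, Option.mem_def, Option.some.injEq] at hp
  cases hp
  intro hqe
  apply h
  apply prefix_of_head?
  have hq' : g.toWord.head? = some q := hq
  rw [hq', hqe]

theorem inj_of_nice {X : Type} [DecidableEq X] (Y : Set X) (g₀ : FreeGroup X)
    (hne : g₀.toWord ≠ [])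
    (hhead : ∀ p ∈ g₀.toWord.head?, p.1 ∉ Y)
    (hlast : ∀ p ∈ g₀.toWord.getLast?, p.1 ∉ Y) :
    Function.Injective (FreeGroup.lift (gens Y g₀)) := by
  classical
  obtain ⟨R, V, f, l, hf, hl, hfl, hWeq⟩ :=
    cyc_decomp g₀.toWord.length g₀.toWord le_rfl (isRed_toWord g₀) hne
  have hg₀ : g₀ = FreeGroup.mk (R ++ V ++ invRev R) := by
    rw [← hWeq, FreeGroup.mk_toWord]
  have hred : IsRed (R ++ V ++ invRev R) := by rw [← hWeq]; exact isRed_toWord g₀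
  have hVne : V ≠ [] := by rintro rfl; simp at hf
  set Pp : List (X × Bool) := R ++ [f] with hPp
  set Pm : List (X × Bool) := R ++ [inv1 l] with hPm
  have hPpne : Pp ≠ [] := by simp [hPp]
  have hPmne : Pm ≠ [] := by simp [hPm]
  have hPlen : Pp.length = Pm.length := by simp [hPp, hPm]
  have hPne : Pp ≠ Pm := by
    intro h
    rw [hPp, hPm] at h
    exact hfl (by simpa using List.append_cancel_left h)
  -- head letters of Pp and Pm are outside Y
  have hPphead : ∀ p ∈ Pp.head?, p.1 ∉ Y := by
    intro p hp
    rcases R with _ | ⟨r, R'⟩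
    · simp only [hPp, List.nil_append, List.head?_cons] at hp
      cases hp
      apply hhead
      rw [hWeq]
      simp only [invRev_eq, List.nil_append, List.map_nil, List.reverse_nil, List.append_nil]
      rcases V with _ | ⟨v0, vt⟩
      · exact absurd rfl hVne
      · simpa using hf
    · simp only [hPp, List.cons_append, List.head?_cons] at hp
      cases hp
      apply hhead
      rw [hWeq]
      simp
  have hPmhead : ∀ p ∈ Pm.head?, p.1 ∉ Y := by
    intro p hp
    rcases R with _ | ⟨r, R'⟩
    · simp only [hPm, List.nil_append, List.head?_cons] at hp
      cases hp
      have : g₀.toWord.getLast? = some l := by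
        rw [hWeq]
        simp only [invRev_eq, List.nil_append, List.map_nil, List.reverse_nil, List.append_nil]
        exact hl
      exact hlast l this
    · simp only [hPm, List.cons_append, List.head?_cons] at hp
      cases hp
      apply hhead
      rw [hWeq]
      simp
  -- main multiplication facts
  have hXw : ∀ g : FreeGroup X, ¬ Pm <+: g.toWord → Pp <+: (g₀ * g).toWord := by
    intro g hg
    rw [hg₀]
    exact pp_core hf hl hred hg
  have hYw : ∀ g : FreeGroup X, ¬ Pp <+: g.toWord → Pm <+: (g₀⁻¹ * g).toWord := by
    intro g hg
    have hginv : g₀⁻¹ = FreeGroup.mk (R ++ invRev V ++ invRev R) := by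
      rw [hg₀, FreeGroup.inv_mk]
      congr 1
      rw [invRev_append, invRev_append, invRev_invRev]
      simp [List.append_assoc]
    have hf' : (invRev V).head? = some (inv1 l) := by rw [head?_invRev, hl]; rfl
    have hl' : (invRev V).getLast? = some (inv1 f) := by rw [getLast?_invRev, hf]; rfl
    have hiVne : invRev V ≠ [] := by
      intro hh
      apply hVne
      have := congrArg List.length hh
      rw [invRev_length] at this
      simpa using this
    have hred' : IsRed (R ++ invRev V ++ invRev R) := by
      have hcopy := hred
      rw [List.append_assoc, isRed_append] at hcopy
      obtain ⟨hR, hrest, jRV⟩ := hcopy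
      rw [isRed_append] at hrest
      obtain ⟨hV, hiR, jVR⟩ := hrest
      have hVRhead : (V ++ invRev R).head? = some f := by
        rw [List.head?_append_of_ne_nil _ hVne, hf]
      have jb1 : ∀ r ∈ R.getLast?, f ≠ inv1 r := fun r hr => jRV r hr f hVRhead
      have jb2 : ∀ r ∈ R.getLast?, r ≠ l := by
        intro r hr hrl
        subst hrl
        have hhead2 : (invRev R).head? = some (inv1 r) := by rw [head?_invRev, hr]; rfl
        exact jVR r hl (inv1 r) hhead2 rfl
      rw [List.append_assoc, isRed_append]
      refine ⟨hR, ?_, ?_⟩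
      · rw [isRed_append]
        refine ⟨isRed_invRev hV, hiR, ?_⟩
        intro x hx q hq
        rw [hl'] at hx
        cases hx
        rcases hR' : R.getLast? with _ | r
        · rw [head?_invRev, hR'] at hq; cases hq
        · rw [head?_invRev, hR'] at hq
          cases hq
          intro h
          apply jb1 r hR'
          have h2 := congrArg inv1 h.symm
          rw [inv1_inv1, inv1_inv1] at h2
          rw [← h2]
          cases r with | mk a b => simp [inv1]
      · intro x hx q hq
        rw [List.head?_append_of_ne_nil _ hiVne, hf'] at hq
        cases hq
        intro h
        exact jb2 x hx (inv1_injective h).symm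
    rw [hginv]
    have := pp_core hf' hl' hred' (g := g) (by simpa using hg)
    simpa using this
  -- neither prefix can hold simultaneously
  have hnot_both : ∀ g : FreeGroup X, Pp <+: g.toWord → Pm <+: g.toWord → False := by
    intro g h1 h2
    have h3 := List.prefix_of_prefix_length_le h1 h2 (le_of_eq hPlen)
    exact hPne (h3.eq_of_length hPlen)
  have hOneP : ¬ Pp <+: (1 : FreeGroup X).toWord := by
    rw [FreeGroup.toWord_one]
    intro h
    exact hPpne (List.prefix_nil.mp h)
  have hOneM : ¬ Pm <+: (1 : FreeGroup X).toWord := by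
    rw [FreeGroup.toWord_one]
    intro h
    exact hPmne (List.prefix_nil.mp h)
  have hPnotpre : ∀ (g : FreeGroup X) (x : X) (b : Bool), x ∈ Y →
      g.toWord.head? = some (x, b) → (¬ Pp <+: g.toWord) ∧ (¬ Pm <+: g.toWord) := by
    intro g x b hx hh
    constructor
    · intro h
      have h2 := head?_of_prefix h hPpne
      rcases hPh : Pp.head? with _ | p
      · rw [hPh] at h2; rw [h2] at hh; cases hh
      · have hpY := hPphead p (by rw [hPh]; rfl)
        rw [hPh] at h2
        rw [h2] at hh
        cases hh
        exact hpY hx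
    · intro h
      have h2 := head?_of_prefix h hPmne
      rcases hPh : Pm.head? with _ | p
      · rw [hPh] at h2; rw [h2] at hh; cases hh
      · have hpY := hPmhead p (by rw [hPh]; rfl)
        rw [hPh] at h2
        rw [h2] at hh
        cases hh
        exact hpY hx
  rcases isEmpty_or_nonempty (↥Y) with hY | hY
  · -- Y is empty: every element is a power of `of none`
    have hpow : ∀ k : ℕ, Pp <+: (g₀ ^ (k + 1)).toWord := by
      intro k
      induction k with
      | zero =>
        have := hXw 1 hOneM
        simpa using this
      | succ k ih =>
        have hnm : ¬ Pm <+: (g₀ ^ (k + 1)).toWord := fun h => hnot_both _ ih h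
        have h2 := hXw _ hnm
        rw [← pow_succ'] at h2
        exact h2
    have hne1 : ∀ k : ℕ, g₀ ^ (k + 1) ≠ 1 := by
      intro k h
      have h2 := hpow k
      rw [h, FreeGroup.toWord_one] at h2
      exact hPpne (List.prefix_nil.mp h2)
    set μ : FreeGroup (Option Y) →* Multiplicative ℤ :=
      FreeGroup.lift (fun _ => Multiplicative.ofAdd (1 : ℤ)) with hμ
    have hrep : ∀ u : FreeGroup (Option Y),
        u = FreeGroup.of (none : Option Y) ^ (Multiplicative.toAdd (μ u)) := by
      intro u
      have hcomp : (zpowersHom (FreeGroup (Option Y))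
            (FreeGroup.of (none : Option Y))).comp μ = MonoidHom.id _ := by
        apply FreeGroup.ext_hom
        intro o
        rcases o with _ | y
        · simp [hμ]
        · exact isEmptyElim y
      have := DFunLike.congr_fun hcomp u
      simpa using this.symm
    rw [injective_iff_map_eq_one]
    intro u hu
    rw [hrep u] at hu ⊢
    rw [map_zpow, FreeGroup.lift_apply_of] at hu
    have hg : gens Y g₀ none = g₀ := rfl
    rw [hg] at hu
    obtain ⟨m, hm⟩ : ∃ m : ℤ, Multiplicative.toAdd (μ u) = m := ⟨_, rfl⟩
    rw [hm] at hu ⊢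
    clear hm
    rcases m with (_ | k) | k
    · simp
    · exfalso
      apply hne1 k
      rw [← zpow_natCast]
      exact_mod_cast hu
    · exfalso
      apply hne1 k
      rw [zpow_negSucc] at hu
      exact inv_eq_one.mp hu
  · -- Y nonempty: ping pong
    have : Nontrivial (Option ↥Y) := inferInstance
    set Xs : Option ↥Y → Set (FreeGroup X) := fun o => Option.rec
        {g : FreeGroup X | Pp <+: g.toWord}
        (fun y => {g : FreeGroup X |
          [((y : X), true)] <+: g.toWord ∧ ¬ Pp <+: g.toWord ∧ ¬ Pm <+: g.toWord}) o with hXs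
    set Ys : Option ↥Y → Set (FreeGroup X) := fun o => Option.rec
        {g : FreeGroup X | Pm <+: g.toWord}
        (fun y => {g : FreeGroup X |
          [((y : X), false)] <+: g.toWord ∧ ¬ Pp <+: g.toWord ∧ ¬ Pm <+: g.toWord}) o with hYs
    apply FreeGroup.injective_lift_of_ping_pong (gens Y g₀) Xs Ys
    · -- nonempty
      rintro (_ | y)
      · exact ⟨g₀, by
          show Pp <+: g₀.toWord
          rw [hWeq]
          rcases V with _ | ⟨v0, vt⟩
          · exact absurd rfl hVne
          · rw [List.head?_cons] at hf
            cases hf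
            exact ⟨vt ++ invRev R, by simp [hPp]⟩⟩
      · refine ⟨FreeGroup.of (y : X), ?_⟩
        have hw : (FreeGroup.of (y : X)).toWord = [((y : X), true)] := FreeGroup.toWord_of _
        have hnp := hPnotpre (FreeGroup.of (y : X)) y true y.2 (by rw [hw]; rfl)
        exact ⟨⟨[], by simp [hw]⟩, hnp.1, hnp.2⟩
    · -- X disjoint
      rintro (_ | y) (_ | y') hij
      · exact absurd rfl hij
      · refine Set.disjoint_left.mpr ?_
        rintro g hg1 ⟨_, hg2, _⟩
        exact hg2 hg1
      · refine Set.disjoint_left.mpr ?_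
        rintro g ⟨_, hg2, _⟩ hg1
        exact hg2 hg1
      · refine Set.disjoint_left.mpr ?_
        rintro g ⟨hg1, _, _⟩ ⟨hg2, _, _⟩
        have e1 := head?_of_prefix hg1 (by simp)
        have e2 := head?_of_prefix hg2 (by simp)
        rw [e2] at e1
        simp only [List.head?_cons, Option.some.injEq, Prod.mk.injEq] at e1
        exact hij (congrArg some (Subtype.ext e1.1.symm))
    · -- Y disjoint
      rintro (_ | y) (_ | y') hij
      · exact absurd rfl hij
      · refine Set.disjoint_left.mpr ?_
        rintro g hg1 ⟨_, _, hg2⟩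
        exact hg2 hg1
      · refine Set.disjoint_left.mpr ?_
        rintro g ⟨_, _, hg2⟩ hg1
        exact hg2 hg1
      · refine Set.disjoint_left.mpr ?_
        rintro g ⟨hg1, _, _⟩ ⟨hg2, _, _⟩
        have e1 := head?_of_prefix hg1 (by simp)
        have e2 := head?_of_prefix hg2 (by simp)
        rw [e2] at e1
        simp only [List.head?_cons, Option.some.injEq, Prod.mk.injEq] at e1
        exact hij (congrArg some (Subtype.ext e1.1.symm))
    · -- X vs Y disjoint
      rintro (_ | y) (_ | y')
      · refine Set.disjoint_left.mpr ?_
        intro g hg1 hg2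
        exact hnot_both g hg1 hg2
      · refine Set.disjoint_left.mpr ?_
        rintro g hg1 ⟨_, hg2, _⟩
        exact hg2 hg1
      · refine Set.disjoint_left.mpr ?_
        rintro g ⟨_, _, hg2⟩ hg1
        exact hg2 hg1
      · refine Set.disjoint_left.mpr ?_
        rintro g ⟨hg1, _, _⟩ ⟨hg2, _, _⟩
        have e1 := head?_of_prefix hg1 (by simp)
        have e2 := head?_of_prefix hg2 (by simp)
        rw [e2] at e1
        simp only [List.head?_cons, Option.some.injEq, Prod.mk.injEq] at e1
        exact absurd e1.2.symm (by simp)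
    · -- a i • (Ys i)ᶜ ⊆ Xs i
      rintro (_ | y)
      · rintro p ⟨g, hg, rfl⟩
        have hg' : ¬ Pm <+: g.toWord := hg
        show Pp <+: ((gens Y g₀ none) • g).toWord
        rw [smul_eq_mul]
        exact hXw g hg'
      · rintro p ⟨g, hg, rfl⟩
        have hh : ¬ [((y : X), false)] <+: g.toWord := by
          intro hh'
          apply hg
          have hhd : g.toWord.head? = some ((y : X), false) := head?_of_prefix hh' (by simp) ▸ rfl
          have hnp := hPnotpre g y false y.2 hhd
          exact ⟨hh', hnp.1, hnp.2⟩
        have hofy : gens Y g₀ (some y) = FreeGroup.mk [((y : X), true)] := rfl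
        have hcomp : ((gens Y g₀ (some y)) • g).toWord = ((y : X), true) :: g.toWord := by
          rw [smul_eq_mul, hofy]
          exact letter_mul (by simpa using hh)
        have hnp := hPnotpre ((gens Y g₀ (some y)) • g) y true y.2 (by rw [hcomp]; rfl)
        exact ⟨by rw [hcomp]; exact ⟨g.toWord, rfl⟩, hnp.1, hnp.2⟩
    · -- a⁻¹ i • (Xs i)ᶜ ⊆ Ys i
      rintro (_ | y)
      · rintro p ⟨g, hg, rfl⟩
        have hg' : ¬ Pp <+: g.toWord := hg
        show Pm <+: ((gens Y g₀)⁻¹ none • g).toWord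
        have hpi : (gens Y g₀)⁻¹ none = g₀⁻¹ := rfl
        rw [hpi, smul_eq_mul]
        exact hYw g hg'
      · rintro p ⟨g, hg, rfl⟩
        have hh : ¬ [((y : X), true)] <+: g.toWord := by
          intro hh'
          apply hg
          have hhd : g.toWord.head? = some ((y : X), true) := head?_of_prefix hh' (by simp) ▸ rfl
          have hnp := hPnotpre g y true y.2 hhd
          exact ⟨hh', hnp.1, hnp.2⟩
        have hofy : (gens Y g₀)⁻¹ (some y) = FreeGroup.mk [((y : X), false)] := by
          show (FreeGroup.mk [((y : X), true)])⁻¹ = _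
          rw [FreeGroup.inv_mk]
          rfl
        have hcomp : ((gens Y g₀)⁻¹ (some y) • g).toWord = ((y : X), false) :: g.toWord := by
          rw [smul_eq_mul, hofy]
          exact letter_mul (by simpa using hh)
        have hnp := hPnotpre ((gens Y g₀)⁻¹ (some y) • g) y false y.2 (by rw [hcomp]; rfl)
        exact ⟨by rw [hcomp]; exact ⟨g.toWord, rfl⟩, hnp.1, hnp.2⟩


end StmtAux

namespace StmtAux
open FreeGroup List
set_option linter.unusedSectionVars false

theorem main_inj {X : Type} [DecidableEq X] (Y : Set X) (w : FreeGroup X)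
    (hw : ∃ p ∈ w.toWord, p.1 ∉ Y) :
    Function.Injective (FreeGroup.lift (gens Y w)) := by
  classical
  set H : Subgroup (FreeGroup X) := Subgroup.closure (FreeGroup.of '' Y) with hH
  set N : Set ℕ := {n | ∃ h ∈ H, ∃ h' ∈ H, ((h * w * h').toWord).length = n} with hN
  have hNne : N.Nonempty := ⟨w.toWord.length, 1, one_mem _, 1, one_mem _, by simp⟩
  obtain ⟨h, hh, h', hh', hlen⟩ := Nat.sInf_mem hNne
  set g₀ : FreeGroup X := h * w * h' with hg₀def
  have hwH : w ∉ H := by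
    intro hmem
    obtain ⟨p, hp, hpY⟩ := hw
    exact hpY (mem_closure_letters hmem p hp)
  have hne : g₀.toWord ≠ [] := by
    intro h0
    have hone : g₀ = 1 := FreeGroup.toWord_eq_nil_iff.mp h0
    apply hwH
    have hwexp : w = h⁻¹ * g₀ * h'⁻¹ := by rw [hg₀def]; group
    rw [hwexp, hone]
    exact mul_mem (mul_mem (inv_mem hh) (one_mem _)) (inv_mem hh')
  -- minimality: no initial letter in Y
  have hhead : ∀ p ∈ g₀.toWord.head?, p.1 ∉ Y := by
    intro p hp hpY
    have hp' : g₀.toWord.head? = some p := hp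
    rcases hW : g₀.toWord with _ | ⟨p0, t⟩
    · rw [hW] at hp'; cases hp'
    · rw [hW, List.head?_cons] at hp'
      cases hp'
      have hcan : (FreeGroup.mk [inv1 p] * g₀).toWord = t := toWord_cancel hW
      have hcH : FreeGroup.mk [inv1 p] ∈ H := single_mem_closure hpY (!p.2)
      have hmemN : t.length ∈ N := by
        refine ⟨FreeGroup.mk [inv1 p] * h, mul_mem hcH hh, h', hh', ?_⟩
        have : FreeGroup.mk [inv1 p] * h * w * h' = FreeGroup.mk [inv1 p] * g₀ := by
          rw [hg₀def]; group
        rw [this, hcan]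
      have hle := Nat.sInf_le hmemN
      rw [← hlen, hW] at hle
      simp at hle
  -- minimality: no final letter in Y
  have hlast : ∀ p ∈ g₀.toWord.getLast?, p.1 ∉ Y := by
    intro q hq hqY
    have hq' : g₀.toWord.getLast? = some q := hq
    have hWne : g₀.toWord ≠ [] := hne
    obtain ⟨M, hM⟩ : ∃ M, g₀.toWord = M ++ [q] := by
      refine ⟨g₀.toWord.dropLast, ?_⟩
      conv_lhs => rw [← List.dropLast_append_getLast hWne]
      rw [List.getLast?_eq_getLast hWne] at hq'
      rw [Option.some.inj hq']
    have hinv : (g₀⁻¹).toWord = inv1 q :: invRev M := by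
      rw [FreeGroup.toWord_inv, hM, invRev_append, invRev_singleton]
      rfl
    have hcan : (FreeGroup.mk [inv1 (inv1 q)] * g₀⁻¹).toWord = invRev M := toWord_cancel hinv
    set c : FreeGroup X := FreeGroup.mk [inv1 q] with hc
    have hcH : c ∈ H := single_mem_closure hqY (!q.2)
    have hcinv : c⁻¹ = FreeGroup.mk [inv1 (inv1 q)] := by
      rw [hc, FreeGroup.inv_mk, invRev_singleton]
    have hlen2 : (g₀ * c).toWord.length = (invRev M).length := by
      have h1 : (g₀ * c).toWord.length = ((g₀ * c)⁻¹).toWord.length := by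
        rw [FreeGroup.toWord_inv, invRev_length]
      rw [h1, mul_inv_rev, hcinv, hcan]
    have hmemN : M.length ∈ N := by
      refine ⟨h, hh, h' * c, mul_mem hh' hcH, ?_⟩
      have : h * w * (h' * c) = g₀ * c := by rw [hg₀def]; group
      rw [this, hlen2, invRev_length]
    have hle := Nat.sInf_le hmemN
    rw [← hlen, hM] at hle
    simp at hle
  -- transfer along the Nielsen automorphism
  have inj₀ := inj_of_nice Y g₀ hne hhead hlast
  set π : FreeGroup Y →* FreeGroup X := FreeGroup.lift (fun y => FreeGroup.of (y : X)) with hπ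
  have hHrange : H = π.range := by
    rw [hH, hπ, FreeGroup.range_lift_eq_closure]
    congr 1
    rw [Set.image_eq_range]
  obtain ⟨η, hη⟩ : ∃ η, π η = h := by rw [hHrange] at hh; exact hh
  obtain ⟨η', hη'⟩ : ∃ η', π η' = h' := by rw [hHrange] at hh'; exact hh'
  set j : FreeGroup Y →* FreeGroup (Option Y) := FreeGroup.map some with hj
  set A : FreeGroup (Option Y) →* FreeGroup (Option Y) :=
    FreeGroup.lift (fun o => Option.rec (j η * FreeGroup.of none * j η')
      (fun y => FreeGroup.of (some y)) o) with hA
  set B : FreeGroup (Option Y) →* FreeGroup (Option Y) :=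
    FreeGroup.lift (fun o => Option.rec ((j η)⁻¹ * FreeGroup.of none * (j η')⁻¹)
      (fun y => FreeGroup.of (some y)) o) with hB
  have hAj : ∀ u, A (j u) = j u := by
    intro u
    have : A.comp j = j := by
      apply FreeGroup.ext_hom
      intro y
      rw [MonoidHom.comp_apply, hj, FreeGroup.map.of, hA, FreeGroup.lift_apply_of]
    exact DFunLike.congr_fun this u
  have hBj : ∀ u, B (j u) = j u := by
    intro u
    have : B.comp j = j := by
      apply FreeGroup.ext_hom
      intro y
      rw [MonoidHom.comp_apply, hj, FreeGroup.map.of, hB, FreeGroup.lift_apply_of]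
    exact DFunLike.congr_fun this u
  have hAB : A.comp B = MonoidHom.id _ := by
    apply FreeGroup.ext_hom
    rintro (_ | y)
    · rw [MonoidHom.comp_apply, hB, FreeGroup.lift_apply_of]
      show A ((j η)⁻¹ * FreeGroup.of none * (j η')⁻¹) = FreeGroup.of none
      rw [_root_.map_mul, _root_.map_mul, _root_.map_inv, _root_.map_inv, hAj, hAj]
      have : A (FreeGroup.of (none : Option Y)) = j η * FreeGroup.of none * j η' := by
        rw [hA, FreeGroup.lift_apply_of]
      rw [this]
      group
    · rw [MonoidHom.comp_apply, hB, FreeGroup.lift_apply_of, hA, FreeGroup.lift_apply_of]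
      rfl
  have hφj : (FreeGroup.lift (gens Y w)).comp j = π := by
    apply FreeGroup.ext_hom
    intro y
    rw [MonoidHom.comp_apply, hj, FreeGroup.map.of, FreeGroup.lift_apply_of, hπ, FreeGroup.lift_apply_of]
    rfl
  have hφA : (FreeGroup.lift (gens Y w)).comp A = FreeGroup.lift (gens Y g₀) := by
    apply FreeGroup.ext_hom
    rintro (_ | y)
    · rw [MonoidHom.comp_apply, hA, FreeGroup.lift_apply_of]
      show FreeGroup.lift (gens Y w) (j η * FreeGroup.of none * j η') = _
      rw [_root_.map_mul, _root_.map_mul]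
      have h1 : FreeGroup.lift (gens Y w) (j η) = h := by
        rw [← hη, ← MonoidHom.comp_apply, hφj]
      have h2 : FreeGroup.lift (gens Y w) (j η') = h' := by
        rw [← hη', ← MonoidHom.comp_apply, hφj]
      rw [h1, h2, FreeGroup.lift_apply_of, FreeGroup.lift_apply_of]
      rfl
    · rw [MonoidHom.comp_apply, hA, FreeGroup.lift_apply_of, FreeGroup.lift_apply_of, FreeGroup.lift_apply_of]
      rfl
  have hfinal : FreeGroup.lift (gens Y w) = (FreeGroup.lift (gens Y g₀)).comp B := by
    rw [← hφA, MonoidHom.comp_assoc, hAB, MonoidHom.comp_id]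
  have hBinj : Function.Injective B := by
    intro u v huv
    have := congrArg A huv
    rw [← MonoidHom.comp_apply, ← MonoidHom.comp_apply, hAB] at this
    exact this
  rw [hfinal, MonoidHom.coe_comp]
  exact Function.Injective.comp inj₀ hBinj

end StmtAux

/-- If `w` is an element of the free group on `X` whose reduced word uses a generator
outside `Y` (equivalently, `w` does not lie in the subgroup generated by `Y`), then
sending a fresh symbol `t` to `w` and each `y ∈ Y` to itself extends to an isomorphism
from the free group on `{t} ∪ Y` onto the subgroup generated by `{w} ∪ Y`. -/
theorem stmt_1 {X : Type} [DecidableEq X] (Y : Set X) (w : FreeGroup X)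
    (hw : ∃ p ∈ w.toWord, p.1 ∉ Y) :
    ∃ e : FreeGroup (Option Y) ≃*
        Subgroup.closure ({w} ∪ (FreeGroup.of '' Y) : Set (FreeGroup X)),
      ((e (FreeGroup.of none) : Subgroup.closure ({w} ∪ (FreeGroup.of '' Y) : Set (FreeGroup X))) : FreeGroup X) = w ∧
      ∀ y : Y, ((e (FreeGroup.of (some y)) :
        Subgroup.closure ({w} ∪ (FreeGroup.of '' Y) : Set (FreeGroup X))) : FreeGroup X)
          = FreeGroup.of (y : X) := by
  classical
  have hinj := StmtAux.main_inj Y w hw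
  have hrange : (FreeGroup.lift (StmtAux.gens Y w)).range
      = Subgroup.closure ({w} ∪ (FreeGroup.of '' Y) : Set (FreeGroup X)) := by
    rw [FreeGroup.range_lift_eq_closure]
    congr 1
    ext g
    constructor
    · rintro ⟨o, rfl⟩
      rcases o with _ | y
      · exact Or.inl rfl
      · exact Or.inr ⟨y, y.2, rfl⟩
    · rintro (rfl | ⟨x, hx, rfl⟩)
      · exact ⟨none, rfl⟩
      · exact ⟨some ⟨x, hx⟩, rfl⟩
  refine ⟨(MonoidHom.ofInjective hinj).trans (MulEquiv.subgroupCongr hrange), ?_, ?_⟩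
  · show ((MonoidHom.ofInjective hinj (FreeGroup.of none) : (FreeGroup.lift (StmtAux.gens Y w)).range) : FreeGroup X) = w
    rw [MonoidHom.ofInjective_apply, FreeGroup.lift_apply_of]
    rfl
  · intro y
    show ((MonoidHom.ofInjective hinj (FreeGroup.of (some y)) : (FreeGroup.lift (StmtAux.gens Y w)).range) : FreeGroup X) = FreeGroup.of (y : X)
    rw [MonoidHom.ofInjective_apply, FreeGroup.lift_apply_of]
    rfl
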